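/- Let M ≥ 0 be real, let K be a natural number, and let τ ∈ ℂ satisfy |(M+1)τ − M| ≤ 1 (equivalently, τ lies in the closed disk of centre M/(M+1) and radius 1/(M+1)). Then |τ| ≤ 1 and the projective forward Euler amplification factor satisfies |τ^K((M+1)τ − M)| ≤ 1. In particular, writing τ = 1 + z, every z in the closed disk of centre −1/(M+1) and radius 1/(M+1) lies in the stability region of projective forward Euler. -/

import Mathlib

/-- Stability of projective forward Euler: if the inner amplification factor `τ`
lies in the closed disk of centre `M/(M+1)` and radius `1/(M+1)` (i.e.
`|(M+1)τ − M| ≤ 1`), then `|τ| ≤ 1` and the amplification factor satisfies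
`|τ^K((M+1)τ − M)| ≤ 1`; in particular, writing `τ = 1 + z`, every `z` in the
closed disk of centre `−1/(M+1)` and radius `1/(M+1)` lies in the stability
region of projective forward Euler. -/
theorem projective_forward_euler_stability
    (M : ℝ) (hM : 0 ≤ M) (K : ℕ) :
    (∀ τ : ℂ, ‖((M : ℂ) + 1) * τ - (M : ℂ)‖ ≤ 1 →
      ‖τ‖ ≤ 1 ∧
      ‖τ ^ K * (((M : ℂ) + 1) * τ - (M : ℂ))‖ ≤ 1) ∧
    (∀ z : ℂ, ‖z - (-(1 / ((M : ℂ) + 1)))‖ ≤ 1 / (M + 1) →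
      ‖(1 + z) ^ K * (((M : ℂ) + 1) * (1 + z) - (M : ℂ))‖ ≤ 1) := by
  have hM1 : (0:ℝ) < M + 1 := by linarith
  have key : ∀ τ : ℂ, ‖((M : ℂ) + 1) * τ - (M : ℂ)‖ ≤ 1 →
      ‖τ‖ ≤ 1 ∧
      ‖τ ^ K * (((M : ℂ) + 1) * τ - (M : ℂ))‖ ≤ 1 := by
    intro τ h
    have habs : ‖τ‖ ≤ 1 := by
      have h1 : ‖((M : ℂ) + 1) * τ‖ ≤ 1 + M := by
        calc ‖((M : ℂ) + 1) * τ‖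
            = ‖(((M : ℂ) + 1) * τ - (M : ℂ)) + (M : ℂ)‖ := by ring_nf
          _ ≤ ‖((M : ℂ) + 1) * τ - (M : ℂ)‖ + ‖(M : ℂ)‖ :=
              norm_add_le _ _
          _ ≤ 1 + M := by
              have : ‖(M : ℂ)‖ = M := by
                rw [Complex.norm_real, Real.norm_of_nonneg hM]
              linarith [this ▸ add_le_add_right h M]
      have h2 : ‖((M : ℂ) + 1) * τ‖ = (M + 1) * ‖τ‖ := by
        rw [norm_mul]
        congr 1
        rw [show ((M : ℂ) + 1) = ((M + 1 : ℝ) : ℂ) by push_cast; ring,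
          Complex.norm_real, Real.norm_of_nonneg hM1.le]
      rw [h2] at h1
      nlinarith
    refine ⟨habs, ?_⟩
    rw [norm_mul, norm_pow]
    calc ‖τ‖ ^ K * ‖((M : ℂ) + 1) * τ - (M : ℂ)‖
        ≤ 1 ^ K * 1 := by
          apply mul_le_mul (pow_le_pow_left₀ (norm_nonneg τ) habs K) h
            (norm_nonneg _) (by norm_num)
      _ = 1 := by norm_num
  refine ⟨key, ?_⟩
  intro z hz
  apply (key (1 + z) ?_).2
  have hne : ((M : ℂ) + 1) ≠ 0 := by
    rw [show ((M : ℂ) + 1) = ((M + 1 : ℝ) : ℂ) by push_cast; ring]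
    exact_mod_cast hM1.ne'
  have : ((M : ℂ) + 1) * (1 + z) - (M : ℂ) = ((M : ℂ) + 1) * (z - (-(1 / ((M : ℂ) + 1)))) := by
    field_simp
    ring
  rw [this, norm_mul]
  have hMabs : ‖(M : ℂ) + 1‖ = M + 1 := by
    rw [show ((M : ℂ) + 1) = ((M + 1 : ℝ) : ℂ) by push_cast; ring,
      Complex.norm_real, Real.norm_of_nonneg hM1.le]
  rw [hMabs]
  calc (M + 1) * ‖z - (-(1 / ((M : ℂ) + 1)))‖
      ≤ (M + 1) * (1 / (M + 1)) := by
        exact mul_le_mul_of_nonneg_left hz hM1.le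
    _ = 1 := by field_simp
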